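/- With the extremal setup below, assume further that v₁v_n is the unique negative edge of Γ′ and that x_n ≤ x₁. Then, for all sufficiently large n, x_i > 0 for every i with 1 ≤ i ≤ n−1. -/

import Mathlib

open Matrix

/-- A signed graph of order `n`: a real symmetric `n × n` matrix with zero diagonal
whose off-diagonal entries lie in `{-1, 0, 1}`. -/
def IsSignedGraph {n : ℕ} (A : Matrix (Fin n) (Fin n) ℝ) : Prop :=
  A.IsSymm ∧ (∀ i, A i i = 0) ∧ ∀ i j, A i j = -1 ∨ A i j = 0 ∨ A i j = 1

/-- The index (largest eigenvalue) of a signed graph. -/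
noncomputable def lambdaMax {n : ℕ} (A : Matrix (Fin n) (Fin n) ℝ) : ℝ :=
  sSup (spectrum ℝ A)

/-- The smallest eigenvalue of a signed graph. -/
noncomputable def lambdaMin {n : ℕ} (A : Matrix (Fin n) (Fin n) ℝ) : ℝ :=
  sInf (spectrum ℝ A)

/-- The spectral radius of a signed graph. -/
noncomputable def rho {n : ℕ} (A : Matrix (Fin n) (Fin n) ℝ) : ℝ :=
  max (lambdaMax A) (-(lambdaMin A))

/-- There is a cycle, all of whose vertices lie in `s`, along whose edges
the product of the entries of `A` is negative. -/
def HasNegCycleOn {n : ℕ} (A : Matrix (Fin n) (Fin n) ℝ) (s : Set (Fin n)) : Prop :=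
  ∃ m : ℕ, 3 ≤ m ∧ ∃ c : ℕ → Fin n,
    (∀ i < m, ∀ j < m, c i = c j → i = j) ∧ (∀ i < m, c i ∈ s) ∧
    (∀ i < m, A (c i) (c ((i + 1) % m)) ≠ 0) ∧
    (∏ i ∈ Finset.range m, A (c i) (c ((i + 1) % m))) < 0

/-- A signed graph is unbalanced if it has a negative cycle. -/
def IsUnbalanced {n : ℕ} (A : Matrix (Fin n) (Fin n) ℝ) : Prop :=
  HasNegCycleOn A Set.univ

/-- An `m`-element set of pairwise adjacent vertices whose induced signed complete
subgraph is unbalanced. -/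
def IsKmMinus {n : ℕ} (A : Matrix (Fin n) (Fin n) ℝ) (m : ℕ) (s : Finset (Fin n)) : Prop :=
  s.card = m ∧ (∀ i ∈ s, ∀ j ∈ s, i ≠ j → A i j ≠ 0) ∧ HasNegCycleOn A ↑s

/-- A `K₄⁻` of a signed graph. -/
def IsK4Minus {n : ℕ} (A : Matrix (Fin n) (Fin n) ℝ) (s : Finset (Fin n)) : Prop :=
  IsKmMinus A 4 s

/-- A signed graph is `t𝒦₄⁻`-free if it contains fewer than `t` distinct `K₄⁻`'s. -/
def TK4Free {n : ℕ} (t : ℕ) (A : Matrix (Fin n) (Fin n) ℝ) : Prop :=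
  {s : Finset (Fin n) | IsK4Minus A s}.ncard < t

/-- Switching isomorphism of signed graphs: `B = (PD) A (PD)ᵀ` for a permutation
matrix `P` and a `±1` diagonal matrix `D`. -/
def SwitchIso {n : ℕ} (A B : Matrix (Fin n) (Fin n) ℝ) : Prop :=
  ∃ (σ : Equiv.Perm (Fin n)) (d : Fin n → ℝ), (∀ i, d i = 1 ∨ d i = -1) ∧
    B = (σ.permMatrix ℝ * Matrix.diagonal d) * A * (σ.permMatrix ℝ * Matrix.diagonal d)ᵀ

/-- The signed graph `Γ_{s,n}`: the vertices `0, …, n-2` are pairwise adjacent,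
the last vertex `n-1` is adjacent exactly to `0, …, s`, and every edge is positive
except the single negative edge joining `n-1` and `0`. -/
noncomputable def GammaSN (s n : ℕ) : Matrix (Fin n) (Fin n) ℝ :=
  fun i j =>
    if i = j then 0
    else if i.val ≠ n - 1 ∧ j.val ≠ n - 1 then 1
    else if min i.val j.val = 0 then -1
    else if min i.val j.val ≤ s then 1
    else 0

/-- The signed graph `Σ_{k,n}` with parameter `r`: vertex `0` is `u₁`, vertex `1` is `u₂`,
vertices `2, …, r+1` are `w₁, …, w_r`, vertices `r+2, …, r+k+1` are `q₁, …, q_k`, and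
vertices `r+k+2, …, n-1` are `v₁, …, v_{n-2-r-k}`.  The only negative edge is `u₁u₂`. -/
noncomputable def SigmaKN (r k n : ℕ) : Matrix (Fin n) (Fin n) ℝ :=
  fun i j =>
    if i = j then 0
    else if min i.val j.val = 0 then (if max i.val j.val = 1 then -1 else 1)
    else if min i.val j.val = 1 then (if max i.val j.val ≤ r + k + 1 then 1 else 0)
    else if max i.val j.val ≤ r + 1 then 1
    else if max i.val j.val ≤ r + k + 1 then 0
    else 1

section AuxProof
open Finset

lemma eig_upper {n : ℕ} (A : Matrix (Fin n) (Fin n) ℝ) (l : ℝ) (x : Fin n → ℝ)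
    (hdiag : ∀ i, A i i = 0) (hle : ∀ i j, A i j ≤ 1)
    (hx0 : ∀ j, 0 ≤ x j) (hxn : (∑ j, x j ^ 2) = 1)
    (heig : A.mulVec x = l • x) (i : Fin n) (hxi : x i = 0) :
    l ≤ (n : ℝ) - 2 := by
  have hl : l = ∑ j, x j * ∑ k, A j k * x k := by
    have h1 : ∑ j, x j * (A.mulVec x) j = ∑ j, x j * (l • x) j := by rw [heig]
    have h2 : ∑ j, x j * (l • x) j = l := by
      simp only [Pi.smul_apply, smul_eq_mul]
      calc ∑ j, x j * (l * x j) = l * ∑ j, x j ^ 2 := by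
            rw [Finset.mul_sum]; congr 1; ext j; ring
        _ = l := by rw [hxn, mul_one]
    rw [← h2, ← h1]
    refine Finset.sum_congr rfl fun j _ => ?_
    simp [Matrix.mulVec, dotProduct]
  set e : Finset (Fin n) := Finset.univ.erase i with he
  have hSsum : ∑ j ∈ e, x j = ∑ j, x j := by
    rw [he, Finset.sum_erase_eq_sub (Finset.mem_univ i), hxi, sub_zero]
  have hQsum : ∑ j ∈ e, x j ^ 2 = 1 := by
    rw [he, Finset.sum_erase_eq_sub (Finset.mem_univ i), hxi]
    simpa using hxn
  set S : ℝ := ∑ j ∈ e, x j with hS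
  have hbound : ∑ j, x j * ∑ k, A j k * x k ≤
      ∑ j ∈ e, ∑ k ∈ e.erase j, x j * x k := by
    calc ∑ j, x j * ∑ k, A j k * x k = ∑ j, ∑ k, x j * (A j k * x k) := by
          simp_rw [Finset.mul_sum]
      _ ≤ ∑ j, ∑ k, (if j = i ∨ k = i ∨ j = k then 0 else x j * x k) := by
          refine Finset.sum_le_sum fun j _ => Finset.sum_le_sum fun k _ => ?_
          by_cases hj : j = i
          · subst hj; simp [hxi]
          by_cases hk : k = i
          · subst hk; simp [hxi]
          by_cases hjk : j = k
          · subst hjk; simp [hdiag, hj]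
          · simp only [hj, hk, hjk, or_self, if_false, if_neg, not_false_iff]
            have := mul_le_mul_of_nonneg_right (mul_le_mul_of_nonneg_left (hle j k) (hx0 j)) (hx0 k)
            calc x j * (A j k * x k) = x j * A j k * x k := by ring
              _ ≤ x j * 1 * x k := this
              _ = x j * x k := by ring
      _ = ∑ j ∈ e, ∑ k, (if j = i ∨ k = i ∨ j = k then 0 else x j * x k) := by
          rw [he]
          refine (Finset.sum_erase _ ?_).symm
          simp
      _ = ∑ j ∈ e, ∑ k ∈ e.erase j, x j * x k := by
          refine Finset.sum_congr rfl fun j hj => ?_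
          have hji : j ≠ i := (Finset.mem_erase.mp hj).1
          calc ∑ k, (if j = i ∨ k = i ∨ j = k then 0 else x j * x k)
              = ∑ k ∈ e.erase j, (if j = i ∨ k = i ∨ j = k then 0 else x j * x k) := by
                rw [he]
                rw [Finset.sum_erase _ (by simp)]
                rw [Finset.sum_erase _ (by simp)]
            _ = ∑ k ∈ e.erase j, x j * x k := by
                refine Finset.sum_congr rfl fun k hk => ?_
                have h1 := Finset.mem_erase.mp hk
                have h2 := Finset.mem_erase.mp (h1.2)
                rw [if_neg]
                push_neg
                exact ⟨hji, h2.1, fun h => (h1.1 h.symm).elim⟩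
  have hinner : ∀ j ∈ e, ∑ k ∈ e.erase j, x j * x k = x j * S - x j ^ 2 := by
    intro j hj
    rw [← Finset.mul_sum, Finset.sum_erase_eq_sub hj, ← hS]
    ring
  have htot : ∑ j ∈ e, ∑ k ∈ e.erase j, x j * x k = S ^ 2 - 1 := by
    rw [Finset.sum_congr rfl hinner, Finset.sum_sub_distrib, ← Finset.sum_mul, ← hS, hQsum]
    ring
  have hn1 : 1 ≤ n := i.pos
  have hcard : (e.card : ℝ) = (n : ℝ) - 1 := by
    rw [he, Finset.card_erase_of_mem (Finset.mem_univ i), Finset.card_univ, Fintype.card_fin]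
    push_cast [Nat.cast_sub hn1]
    ring
  have hCS : S ^ 2 ≤ (n : ℝ) - 1 := by
    have h := sq_sum_le_card_mul_sum_sq (s := e) (f := x)
    rw [hQsum] at h
    calc S ^ 2 ≤ (e.card : ℝ) * 1 := by exact_mod_cast h
      _ = (n:ℝ) - 1 := by rw [hcard, mul_one]
  linarith [hl ▸ hbound, htot ▸ hbound]

lemma rayleigh_le_lambdaMax {n : ℕ} (B : Matrix (Fin n) (Fin n) ℝ) (hB : B.IsHermitian)
    (y : EuclideanSpace ℝ (Fin n)) (hy : y ≠ 0) :
    (∑ j, B.mulVec y j * y j) / (∑ j, y j * y j) ≤ lambdaMax B := by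
  have hn : Nontrivial (EuclideanSpace ℝ (Fin n)) := by
    rcases subsingleton_or_nontrivial (EuclideanSpace ℝ (Fin n)) with h | h
    · exact absurd (Subsingleton.elim y 0) hy
    · exact h
  set T : EuclideanSpace ℝ (Fin n) →ₗ[ℝ] EuclideanSpace ℝ (Fin n) := toEuclideanLin B
  have hT : T.IsSymmetric := isHermitian_iff_isSymmetric.mp hB
  set μ : ℝ := ⨆ x : { x : EuclideanSpace ℝ (Fin n) // x ≠ 0 },
      RCLike.re (inner ℝ (T x) (x : EuclideanSpace ℝ (Fin n)) : ℝ) / ‖(x : EuclideanSpace ℝ (Fin n))‖ ^ 2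
  have hev := hT.hasEigenvalue_iSup_of_finiteDimensional
  have hμmem : μ ∈ spectrum ℝ B := by
    rw [← Matrix.spectrum_toEuclideanLin (A := B) (𝕜 := ℝ)]
    exact hev.mem_spectrum
  -- bounded above
  have hbdd : BddAbove (Set.range fun x : { x : EuclideanSpace ℝ (Fin n) // x ≠ 0 } =>
      RCLike.re (inner ℝ (T x) (x : EuclideanSpace ℝ (Fin n)) : ℝ) / ‖(x : EuclideanSpace ℝ (Fin n))‖ ^ 2) := by
    refine ⟨‖LinearMap.toContinuousLinearMap T‖, ?_⟩
    rintro v ⟨x, rfl⟩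
    have hx : (0:ℝ) < ‖(x : EuclideanSpace ℝ (Fin n))‖ := by
      simpa [norm_pos_iff] using x.2
    have h1 : (inner ℝ (T x) (x : EuclideanSpace ℝ (Fin n)) : ℝ) ≤ ‖T x‖ * ‖(x:EuclideanSpace ℝ (Fin n))‖ :=
      real_inner_le_norm _ _
    have h2 : ‖T x‖ ≤ ‖LinearMap.toContinuousLinearMap T‖ * ‖(x:EuclideanSpace ℝ (Fin n))‖ :=
      (LinearMap.toContinuousLinearMap T).le_opNorm _
    have : (inner ℝ (T x) (x : EuclideanSpace ℝ (Fin n)) : ℝ) ≤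
        ‖LinearMap.toContinuousLinearMap T‖ * ‖(x:EuclideanSpace ℝ (Fin n))‖ ^ 2 := by
      nlinarith [norm_nonneg (T x.1)]
    dsimp only
    rw [div_le_iff₀ (by positivity)]
    simpa [mul_comm] using this
  have hyle : (RCLike.re (inner ℝ (T y) y : ℝ)) / ‖y‖ ^ 2 ≤ μ :=
    le_ciSup hbdd (⟨y, hy⟩ : { x : EuclideanSpace ℝ (Fin n) // x ≠ 0 })
  have hμle : μ ≤ lambdaMax B :=
    le_csSup ((Matrix.finite_spectrum B).bddAbove) hμmem
  refine le_trans ?_ (le_trans hyle hμle)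
  have hTy : ∀ j, T y j = B.mulVec y j := fun j => rfl
  have hinner : (inner ℝ (T y) y : ℝ) = ∑ j, B.mulVec y j * y j := by
    simp [PiLp.inner_apply, RCLike.inner_apply, hTy, mul_comm]
  have hnorm : ‖y‖ ^ 2 = ∑ j, y j * y j := by
    rw [← real_inner_self_eq_norm_sq]
    rw [PiLp.inner_apply]
    simp only [RCLike.inner_apply, conj_trivial]
  rw [show (RCLike.re (inner ℝ (T y) y : ℝ)) = (inner ℝ (T y) y : ℝ) from rfl, hinner, hnorm]

lemma gamma_apply (s n : ℕ) (i j : Fin n) : GammaSN s n i j =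
    if i.val = j.val then 0
    else if i.val ≠ n - 1 ∧ j.val ≠ n - 1 then 1
    else if min i.val j.val = 0 then -1
    else if min i.val j.val ≤ s then 1
    else 0 := by
  simp [GammaSN, Fin.ext_iff]

lemma gamma_sg (s n : ℕ) : IsSignedGraph (GammaSN s n) := by
  refine ⟨?_, fun i => by simp [GammaSN], fun i j => by rw [gamma_apply]; split_ifs <;> norm_num⟩
  ext i j
  rw [Matrix.transpose_apply, gamma_apply, gamma_apply]
  split_ifs <;> first | rfl | omega

lemma gamma_unb (s n : ℕ) (hs : 1 ≤ s) (hn : 4 ≤ n) : IsUnbalanced (GammaSN s n) := by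
  set c : ℕ → Fin n := fun i => if i = 0 then ⟨0, by omega⟩ else if i = 1 then ⟨1, by omega⟩
    else ⟨n-1, by omega⟩ with hc
  have hc0 : (c 0).val = 0 := rfl
  have hc1 : (c 1).val = 1 := rfl
  have hc2 : (c 2).val = n - 1 := rfl
  have h01 : GammaSN s n (c 0) (c 1) = 1 := by
    rw [gamma_apply, hc0, hc1, if_neg (by omega), if_pos (by omega)]
  have h12 : GammaSN s n (c 1) (c 2) = 1 := by
    have hm : min 1 (n-1) = 1 := by omega
    rw [gamma_apply, hc1, hc2, if_neg (by omega), if_neg (by omega), hm,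
      if_neg (by omega), if_pos (by omega)]
  have h20 : GammaSN s n (c 2) (c 0) = -1 := by
    have hm : min (n-1) 0 = 0 := by omega
    rw [gamma_apply, hc2, hc0, if_neg (by omega), if_neg (by omega), hm, if_pos rfl]
  refine ⟨3, le_refl 3, c, ?_, fun i _ => Set.mem_univ _, ?_, ?_⟩
  · intro i hi j hj hij
    have h := congrArg Fin.val hij
    interval_cases i <;> interval_cases j <;> simp only [hc0, hc1, hc2] at h <;> omega
  · intro i hi
    interval_cases i
    · show GammaSN s n (c 0) (c 1) ≠ 0; rw [h01]; norm_num
    · show GammaSN s n (c 1) (c 2) ≠ 0; rw [h12]; norm_num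
    · show GammaSN s n (c 2) (c 0) ≠ 0; rw [h20]; norm_num
  · rw [Finset.prod_range_succ, Finset.prod_range_succ, Finset.prod_range_one]
    show GammaSN s n (c 0) (c 1) * GammaSN s n (c 1) (c 2) * GammaSN s n (c 2) (c 0) < 0
    rw [h01, h12, h20]; norm_num

lemma gamma_neg_entry {r n : ℕ} (hn : 4 ≤ n) {a b : Fin n} (h : GammaSN r n a b < 0) :
    (a.val = 0 ∧ b.val = n - 1) ∨ (a.val = n - 1 ∧ b.val = 0) := by
  rw [gamma_apply] at h
  split_ifs at h <;> try norm_num at h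
  omega

lemma gamma_k4_mem {r n : ℕ} (hn : 4 ≤ n) {s4 : Finset (Fin n)}
    (h : IsK4Minus (GammaSN r n) s4) :
    (⟨0, by omega⟩ : Fin n) ∈ s4 ∧ (⟨n-1, by omega⟩ : Fin n) ∈ s4 ∧
      ∀ a ∈ s4, a.val ≠ 0 → a.val ≠ n - 1 → 1 ≤ a.val ∧ a.val ≤ r := by
  obtain ⟨hcard, hadj, m, hm, c, hinj, hmem, hnz, hprod⟩ := h
  -- some edge of the cycle is negative
  have hex : ∃ i ∈ Finset.range m, GammaSN r n (c i) (c ((i+1) % m)) < 0 := by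
    by_contra hco
    push_neg at hco
    exact absurd (Finset.prod_nonneg fun i hi => (hco i hi)) (not_le.mpr hprod)
  obtain ⟨i, hi, hineg⟩ := hex
  have hi' : i < m := Finset.mem_range.mp hi
  have hmem1 : c i ∈ s4 := hmem i hi'
  have hmem2 : c ((i+1) % m) ∈ s4 := hmem _ (Nat.mod_lt _ (by omega))
  have hkey := gamma_neg_entry hn hineg
  have h0 : (⟨0, by omega⟩ : Fin n) ∈ s4 ∧ (⟨n-1, by omega⟩ : Fin n) ∈ s4 := by
    rcases hkey with ⟨h1, h2⟩ | ⟨h1, h2⟩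
    · constructor
      · have : c i = (⟨0, by omega⟩ : Fin n) := Fin.ext h1
        rwa [← this]
      · have : c ((i+1) % m) = (⟨n-1, by omega⟩ : Fin n) := Fin.ext h2
        rwa [← this]
    · constructor
      · have : c ((i+1) % m) = (⟨0, by omega⟩ : Fin n) := Fin.ext h2
        rwa [← this]
      · have : c i = (⟨n-1, by omega⟩ : Fin n) := Fin.ext h1
        rwa [← this]
  refine ⟨h0.1, h0.2, fun a ha ha0 han => ?_⟩
  have hne : a ≠ (⟨n-1, by omega⟩ : Fin n) := by
    intro hcon; exact han (congrArg Fin.val hcon)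
  have hadj2 := hadj a ha _ h0.2 hne
  rw [gamma_apply] at hadj2
  have haval : a.val < n := a.isLt
  split_ifs at hadj2 with h1 h2 h3 h4 <;> simp_all <;> omega

lemma gamma_tk4 {r n t : ℕ} (hn : 4 ≤ n) (hrt : r.choose 2 < t) :
    TK4Free t (GammaSN r n) := by
  unfold TK4Free
  set P : Set (Finset (Fin n)) := {s | IsK4Minus (GammaSN r n) s} with hP
  set T : Finset (Finset ℕ) := (Finset.Icc 1 r).powersetCard 2 with hT
  set F : Finset (Fin n) → Finset ℕ := fun s4 => (s4.image Fin.val) \ {0, n-1} with hF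
  have hmapsto : Set.MapsTo F P (↑T : Set (Finset ℕ)) := by
    intro s4 hs4
    obtain ⟨h0, hvn, hbound⟩ := gamma_k4_mem hn hs4
    have hsub : ({0, n-1} : Finset ℕ) ⊆ s4.image Fin.val := by
      intro z hz
      simp only [Finset.mem_insert, Finset.mem_singleton] at hz
      rcases hz with rfl | rfl
      · exact Finset.mem_image.mpr ⟨_, h0, rfl⟩
      · exact Finset.mem_image.mpr ⟨_, hvn, rfl⟩
    simp only [Finset.mem_coe, hT, Finset.mem_powersetCard]
    constructor
    · intro z hz
      simp only [hF, Finset.mem_sdiff, Finset.mem_image, Finset.mem_insert,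
        Finset.mem_singleton] at hz
      obtain ⟨⟨a, ha, rfl⟩, hne⟩ := hz
      push_neg at hne
      have := hbound a ha hne.1 hne.2
      exact Finset.mem_Icc.mpr this
    · rw [hF]
      rw [Finset.card_sdiff_of_subset hsub, Finset.card_image_of_injective _ Fin.val_injective,
        hs4.1]
      rw [Finset.card_insert_of_notMem (by simp; omega), Finset.card_singleton]
  have hinj : Set.InjOn F P := by
    intro s4 hs4 s4' hs4' heq
    obtain ⟨h0, hvn, -⟩ := gamma_k4_mem hn hs4
    obtain ⟨h0', hvn', -⟩ := gamma_k4_mem hn hs4'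
    have hsub : ({0, n-1} : Finset ℕ) ⊆ s4.image Fin.val := by
      intro z hz
      simp only [Finset.mem_insert, Finset.mem_singleton] at hz
      rcases hz with rfl | rfl
      · exact Finset.mem_image.mpr ⟨_, h0, rfl⟩
      · exact Finset.mem_image.mpr ⟨_, hvn, rfl⟩
    have hsub' : ({0, n-1} : Finset ℕ) ⊆ s4'.image Fin.val := by
      intro z hz
      simp only [Finset.mem_insert, Finset.mem_singleton] at hz
      rcases hz with rfl | rfl
      · exact Finset.mem_image.mpr ⟨_, h0', rfl⟩
      · exact Finset.mem_image.mpr ⟨_, hvn', rfl⟩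
    have himg : s4.image Fin.val = s4'.image Fin.val := by
      have e1 := Finset.sdiff_union_of_subset hsub
      have e2 := Finset.sdiff_union_of_subset hsub'
      rw [← e1, ← e2]
      have heq' : image Fin.val s4 \ {0, n-1} = image Fin.val s4' \ {0, n-1} := heq
      rw [heq']
    exact Finset.image_injective Fin.val_injective himg
  calc P.ncard ≤ (↑T : Set (Finset ℕ)).ncard :=
        Set.ncard_le_ncard_of_injOn F hmapsto hinj (T.finite_toSet)
    _ = T.card := Set.ncard_coe_finset T
    _ = r.choose 2 := by rw [hT, Finset.card_powersetCard, Nat.card_Icc]; norm_num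
    _ < t := hrt

section
variable {r n : ℕ} (hr2 : 2 ≤ r) (hn : r + 4 ≤ n)

/-- counting helper -/
lemma count_help (hr2 : 2 ≤ r) (hn : r + 4 ≤ n) :
    ∑ k ∈ Finset.range n, (if k = n-1 then (0:ℝ) else if k = 0 then -1
      else if k ≤ r then 1 else 0) = (r:ℝ) - 1 := by
  rw [← Finset.sum_subset (Finset.range_subset_range.mpr (show r+1 ≤ n by omega))
      (fun x _ hx => by
        rw [Finset.mem_range, not_lt] at hx
        split_ifs <;> first | rfl | omega)]
  have hcong : ∀ k ∈ Finset.range (r+1),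
      (if k = n-1 then (0:ℝ) else if k = 0 then -1 else if k ≤ r then 1 else 0)
      = 1 + (if k = 0 then (-2:ℝ) else 0) := by
    intro k hk
    rw [Finset.mem_range] at hk
    split_ifs <;> first | omega | norm_num
  rw [Finset.sum_congr rfl hcong, Finset.sum_add_distrib, Finset.sum_const,
    Finset.card_range, Finset.sum_ite_eq' (Finset.range (r+1)) 0 (fun _ => (-2:ℝ))]
  simp only [Finset.mem_range, Nat.succ_pos, if_pos (by omega : 0 < r + 1)]
  push_cast
  ring
end

section
variable {r n : ℕ}

noncomputable def eps (n : ℕ) : ℝ := 1 / n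

noncomputable def yv (n : ℕ) : Fin n → ℝ := fun j => if j.val = n - 1 then eps n else 1

lemma row_main (hr2 : 2 ≤ r) (hn : r + 4 ≤ n) (j : Fin n) (hj : j.val ≠ n - 1) :
    ∑ k, GammaSN r n j k * yv n k =
      ((n:ℝ) - 2) + (if j.val = 0 then (-1:ℝ) else if j.val ≤ r then 1 else 0) * eps n := by
  set cj : ℝ := if j.val = 0 then (-1:ℝ) else if j.val ≤ r then 1 else 0 with hcj
  have hpt : ∀ k : Fin n, GammaSN r n j k * yv n k =
      (fun k : ℕ => 1 + (if k = n-1 then cj * eps n - 1 else 0)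
        + (if k = j.val then (-1:ℝ) else 0)) k.val := by
    intro k
    have hkn : k.val < n := k.isLt
    have hjn : j.val < n := j.isLt
    dsimp only
    rw [gamma_apply]
    unfold yv
    by_cases h1 : k.val = n - 1
    · have hmin : min j.val k.val = j.val := by omega
      rw [hmin, hcj]
      split_ifs <;> (try (exfalso; omega)) <;> ring
    · rw [hcj]
      split_ifs <;> (try (exfalso; omega)) <;> ring
  calc ∑ k, GammaSN r n j k * yv n k
      = ∑ k : Fin n, (fun k : ℕ => 1 + (if k = n-1 then cj * eps n - 1 else 0)
        + (if k = j.val then (-1:ℝ) else 0)) k.val := Finset.sum_congr rfl (fun k _ => hpt k)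
    _ = ∑ k ∈ Finset.range n, (1 + (if k = n-1 then cj * eps n - 1 else 0)
        + (if k = j.val then (-1:ℝ) else 0)) := by
          exact Fin.sum_univ_eq_sum_range (fun k : ℕ => 1 + (if k = n-1 then cj * eps n - 1 else 0)
            + (if k = j.val then (-1:ℝ) else 0)) n
    _ = ((n:ℝ) - 2) + cj * eps n := by
        rw [Finset.sum_add_distrib, Finset.sum_add_distrib, Finset.sum_const, Finset.card_range,
          Finset.sum_ite_eq' (Finset.range n) (n-1) (fun _ => cj * eps n - 1),
          Finset.sum_ite_eq' (Finset.range n) j.val (fun _ => (-1:ℝ)),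
          if_pos (Finset.mem_range.mpr (by omega : n - 1 < n)),
          if_pos (Finset.mem_range.mpr j.isLt)]
        push_cast
        ring

lemma row_last (hr2 : 2 ≤ r) (hn : r + 4 ≤ n) :
    ∑ k, GammaSN r n ⟨n-1, by omega⟩ k * yv n k = (r:ℝ) - 1 := by
  have hpt : ∀ k : Fin n, GammaSN r n ⟨n-1, by omega⟩ k * yv n k =
      (fun k : ℕ => if k = n-1 then (0:ℝ) else if k = 0 then -1
        else if k ≤ r then 1 else 0) k.val := by
    intro k
    have hkn : k.val < n := k.isLt
    dsimp only
    rw [gamma_apply]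
    unfold yv
    have hvv : (⟨n-1, by omega⟩ : Fin n).val = n - 1 := rfl
    rw [hvv]
    by_cases h1 : k.val = n - 1
    · split_ifs <;> (try (exfalso; omega)) <;> ring
    · have hmin : min (n-1) k.val = k.val := by omega
      rw [hmin]
      split_ifs <;> (try (exfalso; omega)) <;> ring
  calc ∑ k, GammaSN r n ⟨n-1, by omega⟩ k * yv n k
      = ∑ k : Fin n, (fun k : ℕ => if k = n-1 then (0:ℝ) else if k = 0 then -1
          else if k ≤ r then 1 else 0) k.val := Finset.sum_congr rfl (fun k _ => hpt k)
    _ = ∑ k ∈ Finset.range n, (if k = n-1 then (0:ℝ) else if k = 0 then -1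
          else if k ≤ r then 1 else 0) := by
          exact Fin.sum_univ_eq_sum_range (fun k : ℕ => if k = n-1 then (0:ℝ) else if k = 0 then -1
            else if k ≤ r then 1 else 0) n
    _ = (r:ℝ) - 1 := count_help hr2 hn

lemma total_sum (hr2 : 2 ≤ r) (hn : r + 4 ≤ n) :
    ∑ j, (∑ k, GammaSN r n j k * yv n k) * yv n j =
      ((n:ℝ) - 1) * ((n:ℝ) - 2) + 2 * ((r:ℝ) - 1) * eps n := by
  have hpt : ∀ j : Fin n, (∑ k, GammaSN r n j k * yv n k) * yv n j =
      (fun j : ℕ => ((n:ℝ) - 2) + (if j = n-1 then ((r:ℝ)-1) * eps n - ((n:ℝ)-2) else 0)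
        + (if j = n-1 then (0:ℝ) else if j = 0 then -1 else if j ≤ r then 1 else 0) * eps n) j.val := by
    intro j
    dsimp only
    by_cases h1 : j.val = n - 1
    · have hj : j = ⟨n-1, by omega⟩ := Fin.ext h1
      rw [hj, row_last hr2 hn]
      unfold yv
      simp only [eq_self_iff_true, if_true]
      ring
    · rw [row_main hr2 hn j h1]
      unfold yv
      rw [if_neg h1, if_neg h1, if_neg h1]
      ring
  calc ∑ j, (∑ k, GammaSN r n j k * yv n k) * yv n j
      = ∑ j : Fin n, (fun j : ℕ => ((n:ℝ) - 2) + (if j = n-1 then ((r:ℝ)-1) * eps n - ((n:ℝ)-2) else 0)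
        + (if j = n-1 then (0:ℝ) else if j = 0 then -1 else if j ≤ r then 1 else 0) * eps n) j.val :=
          Finset.sum_congr rfl (fun j _ => hpt j)
    _ = ∑ j ∈ Finset.range n, (((n:ℝ) - 2) + (if j = n-1 then ((r:ℝ)-1) * eps n - ((n:ℝ)-2) else 0)
        + (if j = n-1 then (0:ℝ) else if j = 0 then -1 else if j ≤ r then 1 else 0) * eps n) := by
          exact Fin.sum_univ_eq_sum_range (fun j : ℕ => ((n:ℝ) - 2)
            + (if j = n-1 then ((r:ℝ)-1) * eps n - ((n:ℝ)-2) else 0)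
            + (if j = n-1 then (0:ℝ) else if j = 0 then -1 else if j ≤ r then 1 else 0) * eps n) n
    _ = ((n:ℝ) - 1) * ((n:ℝ) - 2) + 2 * ((r:ℝ) - 1) * eps n := by
        rw [Finset.sum_add_distrib, Finset.sum_add_distrib, Finset.sum_const, Finset.card_range,
          Finset.sum_ite_eq' (Finset.range n) (n-1) (fun _ => ((r:ℝ)-1) * eps n - ((n:ℝ)-2)),
          if_pos (Finset.mem_range.mpr (by omega : n - 1 < n)), ← Finset.sum_mul, count_help hr2 hn]
        push_cast
        ring

lemma norm_sum (hn : r + 4 ≤ n) :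
    ∑ j, yv n j * yv n j = ((n:ℝ) - 1) + eps n * eps n := by
  have hpt : ∀ j : Fin n, yv n j * yv n j =
      (fun j : ℕ => 1 + (if j = n-1 then eps n * eps n - 1 else 0)) j.val := by
    intro j
    dsimp only
    unfold yv
    split_ifs <;> ring
  calc ∑ j, yv n j * yv n j
      = ∑ j : Fin n, (fun j : ℕ => 1 + (if j = n-1 then eps n * eps n - 1 else 0)) j.val :=
          Finset.sum_congr rfl (fun j _ => hpt j)
    _ = ∑ j ∈ Finset.range n, (1 + (if j = n-1 then eps n * eps n - 1 else 0)) := by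
          exact Fin.sum_univ_eq_sum_range (fun j : ℕ => 1 + (if j = n-1 then eps n * eps n - 1 else 0)) n
    _ = ((n:ℝ) - 1) + eps n * eps n := by
        rw [Finset.sum_add_distrib, Finset.sum_const, Finset.card_range,
          Finset.sum_ite_eq' (Finset.range n) (n-1) (fun _ => eps n * eps n - 1),
          if_pos (Finset.mem_range.mpr (by omega : n - 1 < n))]
        push_cast
        ring
end


lemma gamma_isHermitian (s n : ℕ) : (GammaSN s n).IsHermitian := by
  have h := (gamma_sg s n).1
  have : (GammaSN s n)ᴴ = (GammaSN s n)ᵀ := by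
    ext i j
    simp [Matrix.conjTranspose_apply, Matrix.transpose_apply]
  rw [Matrix.IsHermitian, this, h]

lemma gamma_lower {r n : ℕ} (hr2 : 2 ≤ r) (hn : r + 4 ≤ n) :
    ((n:ℝ) - 2) < lambdaMax (GammaSN r n) := by
  have hn0 : (0:ℝ) < n := by exact_mod_cast Nat.pos_of_ne_zero (by omega)
  set y : EuclideanSpace ℝ (Fin n) := (WithLp.equiv 2 (Fin n → ℝ)).symm (yv n) with hy
  have hyj : ∀ j : Fin n, y j = yv n j := fun j => rfl
  have hyne : y ≠ 0 := by
    intro h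
    have h0 : y ⟨0, by omega⟩ = 0 := by rw [h]; rfl
    rw [hyj] at h0
    unfold yv at h0
    rw [show ((⟨0, by omega⟩ : Fin n) : Fin n).val = 0 from rfl, if_neg (by omega)] at h0
    norm_num at h0
  have hray := rayleigh_le_lambdaMax (GammaSN r n) (gamma_isHermitian r n) y hyne
  have hnum : ∑ j, (GammaSN r n).mulVec y j * y j =
      ((n:ℝ) - 1) * ((n:ℝ) - 2) + 2 * ((r:ℝ) - 1) * eps n := by
    rw [← total_sum hr2 hn]
    exact Finset.sum_congr rfl (fun j _ => rfl)
  have hden : ∑ j, y j * y j = ((n:ℝ) - 1) + eps n * eps n := by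
    rw [← norm_sum hn]
    exact Finset.sum_congr rfl (fun j _ => rfl)
  rw [hnum, hden] at hray
  have heps : eps n = 1 / (n:ℝ) := rfl
  have hepos : 0 < eps n := by rw [heps]; positivity
  have hNpos : 0 < ((n:ℝ) - 1) + eps n * eps n := by
    have : (6:ℝ) ≤ n := by exact_mod_cast (by omega : 6 ≤ n)
    nlinarith [hepos]
  refine lt_of_lt_of_le ?_ hray
  rw [lt_div_iff₀ hNpos]
  have hn6 : (6:ℝ) ≤ n := by exact_mod_cast (by omega : 6 ≤ n)
  have hrR : (2:ℝ) ≤ r := by exact_mod_cast hr2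
  have h1 : ((n:ℝ) - 2) * eps n < 1 := by
    rw [heps, ← div_eq_mul_one_div]
    rw [div_lt_one hn0]
    linarith
  nlinarith [mul_lt_mul_of_pos_right h1 hepos,
    mul_le_mul_of_nonneg_right (by linarith : (2:ℝ) ≤ 2*((r:ℝ)-1)) hepos.le]

lemma t_eq (t r : ℕ) (ht : 2 ≤ t)
    (hr : (r : ℝ) = (1 + Real.sqrt (8 * (t : ℝ) - 7)) / 2) :
    2 ≤ r ∧ r.choose 2 < t := by
  have htR : (2:ℝ) ≤ t := by exact_mod_cast ht
  have h7 : (0:ℝ) ≤ 8*(t:ℝ) - 7 := by linarith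
  have hs : Real.sqrt (8*(t:ℝ) - 7) = 2*(r:ℝ) - 1 := by linarith
  have hsq : 8*(t:ℝ) - 7 = (2*(r:ℝ) - 1)^2 := by
    rw [← hs]
    exact (Real.sq_sqrt h7).symm
  have h3 : (3:ℝ) ≤ 2*(r:ℝ) - 1 := by
    nlinarith [Real.sqrt_nonneg (8*(t:ℝ) - 7), hs, hsq]
  have hr2 : 2 ≤ r := by exact_mod_cast (by linarith : (2:ℝ) ≤ (r:ℝ))
  have hnat : r * (r-1) = 2*(t-1) := by
    have hcast : ((r*(r-1) : ℕ) : ℝ) = ((2*(t-1) : ℕ) : ℝ) := by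
      push_cast [Nat.cast_sub (by omega : 1 ≤ r), Nat.cast_sub (by omega : 1 ≤ t)]
      nlinarith [hsq]
    exact_mod_cast hcast
  refine ⟨hr2, ?_⟩
  rw [Nat.choose_two_right, hnat]
  omega

end AuxProof

theorem extremal_eigenvector_positive (t r : ℕ) (ht : 2 ≤ t)
    (hr : (r : ℝ) = (1 + Real.sqrt (8 * (t : ℝ) - 7)) / 2) :
    ∃ N : ℕ, ∀ n : ℕ, ∀ _hn : N + 4 ≤ n, t ≤ (n - 2).choose 2 →
      ∀ (A : Matrix (Fin n) (Fin n) ℝ) (x : Fin n → ℝ),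
        IsSignedGraph A → IsUnbalanced A → TK4Free t A →
        (∀ B : Matrix (Fin n) (Fin n) ℝ,
          IsSignedGraph B → IsUnbalanced B → TK4Free t B → lambdaMax B ≤ lambdaMax A) →
        (∀ i, 0 ≤ x i) → (∑ i, x i ^ 2) = 1 → A.mulVec x = lambdaMax A • x →
        let v1 : Fin n := ⟨0, by omega⟩
        let v2 : Fin n := ⟨1, by omega⟩
        let vn : Fin n := ⟨n - 1, by omega⟩
        A v1 vn < 0 →
        (∀ i j : Fin n, A i j < 0 → (i = v1 ∧ j = vn) ∨ (i = vn ∧ j = v1)) →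
        x vn ≤ x v1 →
        ∀ i : Fin n, i.val < n - 1 → 0 < x i := by
  obtain ⟨hr2, hrt⟩ := t_eq t r ht hr
  refine ⟨r, ?_⟩
  intro n hn _ht A x hsg hunb htf hmax hx0 hxn heig v1 v2 vn hneg huniq hxle i hi
  by_contra hcon
  have hxi : x i = 0 := le_antisymm (not_lt.mp hcon) (hx0 i)
  have hup : lambdaMax A ≤ (n:ℝ) - 2 :=
    eig_upper A _ x hsg.2.1
      (fun a b => by rcases hsg.2.2 a b with h|h|h <;> rw [h] <;> norm_num)
      hx0 hxn heig i hxi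
  have hnr : r + 4 ≤ n := by omega
  have hBle := hmax (GammaSN r n) (gamma_sg r n)
    (gamma_unb r n (by omega) (by omega)) (gamma_tk4 (by omega) hrt)
  have hlow := gamma_lower hr2 hnr
  linarith
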